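/- Let d ≥ 1, γ ∈ (0,1), M > 0, and let u: ℝ^d → ℝ^d be bounded and continuously differentiable with sup_x ‖∇u(x)‖ ≤ 1/2 (operator norm) and ‖∇u(x) − ∇u(y)‖ ≤ M |x−y|^γ for all x, y. Set Φ(x) := x + u(x), so that Φ is a bi-Lipschitz bijection of ℝ^d, and define g̃(x,z) := Φ(Φ^{−1}(x) + z) − x. Then: (i) |g̃(x,z)| ≤ (3/2)|z| for all x, z ∈ ℝ^d; and (ii) there exists a constant C > 0 depending only on M such that |g̃(x,z) − g̃(y,z)| ≤ C |x−y| · |z|^γ for all x, y, z ∈ ℝ^d. -/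

import Mathlib

open MeasureTheory Real

/-- Estimates on `g̃(x,z) = Φ(Φ⁻¹(x) + z) - x` where `Φ = id + u` and `u` is bounded,
`C¹`, with `‖∇u‖ ≤ 1/2` and `γ`-Hölder continuous derivative with constant `M`:
`|g̃(x,z)| ≤ (3/2)|z|` and `|g̃(x,z) - g̃(y,z)| ≤ C |x-y| |z|^γ` with `C = C(M)`. -/
theorem stmt_11 (M : ℝ) (hM : 0 < M) :
    ∃ C > (0:ℝ), ∀ d : ℕ, 1 ≤ d → ∀ γ ∈ Set.Ioo (0:ℝ) 1,
      ∀ u : EuclideanSpace ℝ (Fin d) → EuclideanSpace ℝ (Fin d),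
        (∃ K, ∀ x, ‖u x‖ ≤ K) → ContDiff ℝ 1 u →
        (∀ x, ‖fderiv ℝ u x‖ ≤ 1 / 2) →
        (∀ x y, ‖fderiv ℝ u x - fderiv ℝ u y‖ ≤ M * ‖x - y‖ ^ γ) →
        ∀ g : EuclideanSpace ℝ (Fin d) → EuclideanSpace ℝ (Fin d) →
            EuclideanSpace ℝ (Fin d),
          (∀ x z, g x z =
            (Function.invFun (fun w => w + u w) x + z) +
              u (Function.invFun (fun w => w + u w) x + z) - x) →
          (∀ x z, ‖g x z‖ ≤ (3 / 2) * ‖z‖) ∧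
          (∀ x y z, ‖g x z - g y z‖ ≤ C * ‖x - y‖ * ‖z‖ ^ γ) := by
  refine ⟨2 * M, by linarith, ?_⟩
  intro d hd γ hγ u hbd hu hgrad hHol g hg
  have hdu : Differentiable ℝ u := hu.differentiable one_ne_zero
  -- u is (1/2)-Lipschitz
  have hulip : ∀ a b : EuclideanSpace ℝ (Fin d), ‖u a - u b‖ ≤ (1/2) * ‖a - b‖ := by
    intro a b
    exact Convex.norm_image_sub_le_of_norm_fderiv_le
      (fun x _ => hdu x) (fun x _ => hgrad x) convex_univ (Set.mem_univ b) (Set.mem_univ a)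
  -- Φ is surjective
  have hsurj : ∀ x : EuclideanSpace ℝ (Fin d), ∃ w, w + u w = x := by
    intro x
    have hlip : LipschitzWith (1/2 : NNReal) (fun w => x - u w) := by
      apply LipschitzWith.of_dist_le_mul
      intro a b
      simp only [dist_eq_norm]
      have h1 : x - u a - (x - u b) = -(u a - u b) := by abel
      rw [h1, norm_neg]
      calc ‖u a - u b‖ ≤ (1/2) * ‖a - b‖ := hulip a b
      _ = (1/2 : NNReal) * ‖a - b‖ := by norm_num
    have hcon : ContractingWith (1/2 : NNReal) (fun w => x - u w) :=
      ⟨by rw [show ((1:NNReal)/2) = (2:NNReal)⁻¹ from one_div 2, ← NNReal.coe_lt_coe]; norm_num, hlip⟩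
    refine ⟨hcon.fixedPoint _, ?_⟩
    have hfix : x - u (hcon.fixedPoint _) = hcon.fixedPoint _ := hcon.fixedPoint_isFixedPt
    exact (sub_eq_iff_eq_add.mp hfix).symm
  -- right inverse
  have hinv : ∀ x : EuclideanSpace ℝ (Fin d),
      Function.invFun (fun w => w + u w) x + u (Function.invFun (fun w => w + u w) x) = x := by
    intro x
    exact Function.invFun_eq (hsurj x)
  -- key identity
  have hkey : ∀ x z, g x z =
      z + (u (Function.invFun (fun w => w + u w) x + z)
        - u (Function.invFun (fun w => w + u w) x)) := by
    intro x z
    rw [hg]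
    set a := Function.invFun (fun w => w + u w) x with ha
    have hxa : a + u a = x := hinv x
    rw [← hxa]
    abel
  constructor
  · intro x z
    rw [hkey]
    calc ‖z + (u (Function.invFun (fun w => w + u w) x + z)
          - u (Function.invFun (fun w => w + u w) x))‖
        ≤ ‖z‖ + ‖u (Function.invFun (fun w => w + u w) x + z)
          - u (Function.invFun (fun w => w + u w) x)‖ := norm_add_le _ _
      _ ≤ ‖z‖ + (1/2) * ‖Function.invFun (fun w => w + u w) x + z
          - Function.invFun (fun w => w + u w) x‖ := by
            have := hulip (Function.invFun (fun w => w + u w) x + z)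
              (Function.invFun (fun w => w + u w) x)
            linarith
      _ = (3/2) * ‖z‖ := by
            have : Function.invFun (fun w => w + u w) x + z
              - Function.invFun (fun w => w + u w) x = z := by abel
            rw [this]; ring
  · intro x y z
    set a := Function.invFun (fun w => w + u w) x with ha
    set b := Function.invFun (fun w => w + u w) y with hb
    -- h w = u(w+z) - u w is (M‖z‖^γ)-Lipschitz
    have hder : ∀ w : EuclideanSpace ℝ (Fin d),
        HasFDerivAt (fun w => u (w + z) - u w)
          (fderiv ℝ u (w + z) - fderiv ℝ u w) w := by
      intro w
      have h1 : HasFDerivAt (fun w : EuclideanSpace ℝ (Fin d) => u (w + z))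
          (fderiv ℝ u (w + z)) w := by
        have := (hdu (w + z)).hasFDerivAt.comp w ((hasFDerivAt_id w).add_const z)
        simpa [Function.comp_def] using this
      exact h1.sub (hdu w).hasFDerivAt
    have hdiff : ∀ w : EuclideanSpace ℝ (Fin d),
        DifferentiableAt ℝ (fun w => u (w + z) - u w) w := fun w => (hder w).differentiableAt
    have hbound : ∀ w : EuclideanSpace ℝ (Fin d),
        ‖fderiv ℝ (fun w => u (w + z) - u w) w‖ ≤ M * ‖z‖ ^ γ := by
      intro w
      rw [(hder w).fderiv]
      have h2 := hHol (w + z) w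
      have hzz : w + z - w = z := by abel
      rw [hzz] at h2
      exact h2
    have hh : ‖(u (a + z) - u a) - (u (b + z) - u b)‖ ≤ M * ‖z‖ ^ γ * ‖a - b‖ :=
      Convex.norm_image_sub_le_of_norm_fderiv_le
        (fun w _ => hdiff w) (fun w _ => hbound w) convex_univ (Set.mem_univ b) (Set.mem_univ a)
    -- ‖a - b‖ ≤ 2‖x - y‖
    have hab : ‖a - b‖ ≤ 2 * ‖x - y‖ := by
      have hxa : a + u a = x := hinv x
      have hyb : b + u b = y := hinv y
      have h1 : a - b = (x - y) - (u a - u b) := by rw [← hxa, ← hyb]; abel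
      have h2 : ‖a - b‖ ≤ ‖x - y‖ + ‖u a - u b‖ := by
        rw [h1]; exact norm_sub_le _ _
      have h3 := hulip a b
      linarith
    have hgdiff : g x z - g y z = (u (a + z) - u a) - (u (b + z) - u b) := by
      rw [hkey x z, hkey y z, ← ha, ← hb]; abel
    rw [hgdiff]
    have hz : (0:ℝ) ≤ ‖z‖ ^ γ := Real.rpow_nonneg (norm_nonneg z) γ
    calc ‖(u (a + z) - u a) - (u (b + z) - u b)‖
        ≤ M * ‖z‖ ^ γ * ‖a - b‖ := hh
      _ ≤ M * ‖z‖ ^ γ * (2 * ‖x - y‖) := by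
          apply mul_le_mul_of_nonneg_left hab (by positivity)
      _ = 2 * M * ‖x - y‖ * ‖z‖ ^ γ := by ring
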